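/- Assume the rate coefficients satisfy the growth condition (GB) with constants C, Q and weights q_{i,k}, let σ belong to class 𝓔 ∪ 𝓔₁ with associated constant m_σ, let N ≥ 2, and let c^N = (c_i^N)_{0≤i≤N} be a nonnegative solution of the N-truncated isolated DGED system on [0,T] with initial data c_i^N(0) = c_{0i} ≥ 0. Set K = 2 C Q m_σ ∑_{i=0}^N i c_{0i}. Then for all t ∈ [0,T], ∑_{i=0}^N σ(i) c_i^N(t) ≤ e^{Kt} ∑_{i=0}^N σ(i) c_{0i}. -/

import Mathlib

open Finset

/-- Truncated operator `Q^N_{1,i}`. -/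
noncomputable def QN1 (a : ℕ → ℕ → ℕ → ℝ) (N : ℕ) (c : ℕ → ℝ) (i : ℕ) : ℝ :=
  ∑ k ∈ Finset.Icc 1 (N - i), ∑ j ∈ Finset.Icc 0 (N - k), a (i + k) j k * c (i + k) * c j

/-- Truncated operator `Q^N_{2,i}`. -/
noncomputable def QN2 (a : ℕ → ℕ → ℕ → ℝ) (N : ℕ) (c : ℕ → ℝ) (i : ℕ) : ℝ :=
  -∑ k ∈ Finset.Icc 1 (N - i), ∑ j ∈ Finset.Icc k N, a j i k * c j * c i

/-- Truncated operator `Q^N_{3,i}`. -/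
noncomputable def QN3 (a : ℕ → ℕ → ℕ → ℝ) (N : ℕ) (c : ℕ → ℝ) (i : ℕ) : ℝ :=
  ∑ k ∈ Finset.Icc 1 i, ∑ j ∈ Finset.Icc k N, a j (i - k) k * c j * c (i - k)

/-- Truncated operator `Q^N_{4,i}`. -/
noncomputable def QN4 (a : ℕ → ℕ → ℕ → ℝ) (N : ℕ) (c : ℕ → ℝ) (i : ℕ) : ℝ :=
  -∑ k ∈ Finset.Icc 1 i, ∑ j ∈ Finset.Icc 0 (N - k), a i j k * c j * c i

/-- `c` is a solution of the `N`-truncated isolated DGED system on the set `I`. -/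
def IsTruncSolIso (a : ℕ → ℕ → ℕ → ℝ) (N : ℕ) (I : Set ℝ) (c : ℕ → ℝ → ℝ) : Prop :=
  ∀ t ∈ I,
    HasDerivAt (c 0) (QN1 a N (fun n => c n t) 0 + QN2 a N (fun n => c n t) 0) t ∧
    (∀ i, 1 ≤ i → i ≤ N - 1 →
      HasDerivAt (c i)
        (QN1 a N (fun n => c n t) i + QN2 a N (fun n => c n t) i +
          QN3 a N (fun n => c n t) i + QN4 a N (fun n => c n t) i) t) ∧
    HasDerivAt (c N) (QN3 a N (fun n => c n t) N + QN4 a N (fun n => c n t) N) t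


/-- Growth condition (GB) on the rate coefficients. -/
def GB (a : ℕ → ℕ → ℕ → ℝ) (C Q : ℝ) (q : ℕ → ℕ → ℝ) : Prop :=
  1 ≤ C ∧ 1 ≤ Q ∧ (∀ i k, 0 ≤ q i k) ∧
  (∀ i : ℕ, 1 ≤ i →
    ∑ k ∈ Finset.Icc 1 i, (k : ℝ) * ((i : ℝ) - k + 1) * q i k ≤ Q * i) ∧
  (∀ i j k : ℕ, 1 ≤ k → k ≤ i → 1 ≤ j →
    a i j k ≤ C * ((i : ℝ) - k + 1) * ((j : ℝ) + k) * q i k)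

/-- The class `𝓔` of convex weight functions. -/
def ClassE (σ : ℝ → ℝ) : Prop :=
  ContDiffOn ℝ 1 σ (Set.Ici 0) ∧ ConvexOn ℝ (Set.Ici 0) σ ∧
  (∀ x : ℝ, 0 ≤ x → 0 ≤ σ x) ∧ σ 0 = 0 ∧
  0 ≤ derivWithin σ (Set.Ici 0) 0 ∧
  ConcaveOn ℝ (Set.Ici 0) (derivWithin σ (Set.Ici 0)) ∧
  Filter.Tendsto (derivWithin σ (Set.Ici 0)) Filter.atTop Filter.atTop ∧
  Filter.Tendsto (fun r : ℝ => σ r / r) Filter.atTop Filter.atTop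

/-- The class `𝓔₁` of convex weight functions. -/
def ClassE1 (σ : ℝ → ℝ) : Prop :=
  ContDiffOn ℝ 2 σ (Set.Ici 0) ∧ ConvexOn ℝ (Set.Ici 0) σ ∧
  (∀ x : ℝ, 0 ≤ x → 0 ≤ σ x) ∧ σ 0 = 0 ∧
  derivWithin σ (Set.Ici 0) 0 = 0 ∧
  ConvexOn ℝ (Set.Ici 0) (derivWithin σ (Set.Ici 0)) ∧
  ∃ A : ℝ, 0 ≤ A ∧ ∀ x : ℝ, 0 ≤ x →
    derivWithin σ (Set.Ici 0) (2 * x) ≤ A * derivWithin σ (Set.Ici 0) x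

/-- `m` is a constant associated to `σ` as in Lemma 3.2 of Laurençot–Mischler. -/
def SigmaConst (σ : ℝ → ℝ) (m : ℝ) : Prop :=
  0 ≤ m ∧ ∀ x y : ℝ, 0 ≤ x → 1 ≤ y →
    (x + y) * (σ (x + y) - σ x - σ y) ≤ m * (x * σ y + y * σ x)


lemma sigma_single {σ : ℝ → ℝ} (hconv : ConvexOn ℝ (Set.Ici 0) σ) (h0 : σ 0 = 0)
    {x s : ℝ} (hx : 0 ≤ x) (hxs : x ≤ s) (hs : 0 < s) : σ x ≤ (x/s) * σ s := by
  have h0m : (0:ℝ) ∈ Set.Ici (0:ℝ) := Set.mem_Ici.mpr (le_refl 0)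
  have hsm : s ∈ Set.Ici (0:ℝ) := Set.mem_Ici.mpr hs.le
  have ht0 : 0 ≤ x/s := by positivity
  have ht1 : 0 ≤ 1 - x/s := by
    have : x/s ≤ 1 := div_le_one_of_le₀ hxs hs.le
    linarith
  have hc := hconv.2 h0m hsm ht1 ht0 (by ring)
  have harg : (1 - x/s) • (0:ℝ) + (x/s) • s = x := by
    field_simp
    simp [hs.ne']
  rw [harg] at hc
  simpa [h0, smul_eq_mul] using hc

lemma sigma_superadd {σ : ℝ → ℝ} (hconv : ConvexOn ℝ (Set.Ici 0) σ) (h0 : σ 0 = 0)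
    {x y : ℝ} (hx : 0 ≤ x) (hy : 0 ≤ y) : σ x + σ y ≤ σ (x + y) := by
  rcases eq_or_lt_of_le (by linarith : (0:ℝ) ≤ x + y) with h | h
  · have hx0 : x = 0 := by linarith
    have hy0 : y = 0 := by linarith
    simp [hx0, hy0, h0]
  · have h1 := sigma_single hconv h0 hx (by linarith) h
    have h2 := sigma_single hconv h0 hy (by linarith) h
    have hsum : (x/(x+y)) * σ (x+y) + (y/(x+y)) * σ (x+y) = σ (x+y) := by
      field_simp
    linarith

lemma sigma_slope {σ : ℝ → ℝ} (hconv : ConvexOn ℝ (Set.Ici 0) σ) (h0 : σ 0 = 0)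
    {x s : ℝ} (hx : 0 ≤ x) (hxs : x ≤ s) : s * σ x ≤ x * σ s := by
  rcases eq_or_lt_of_le (le_trans hx hxs) with h | h
  · have : x = 0 := le_antisymm (h ▸ hxs) hx
    simp [this, ← h, h0]
  · have h1 := sigma_single hconv h0 hx hxs h
    have : s * σ x ≤ s * ((x/s) * σ s) := by
      exact mul_le_mul_of_nonneg_left h1 h.le
    calc s * σ x ≤ s * ((x/s) * σ s) := this
      _ = x * σ s := by field_simp


lemma weakA (a : ℕ → ℕ → ℕ → ℝ) (N : ℕ) (c : ℕ → ℝ) (φ : ℕ → ℝ) :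
    ∑ i ∈ Finset.range (N+1), φ i * QN1 a N c i
      = ∑ k ∈ Finset.Icc 1 N, ∑ j ∈ Finset.Icc k N, ∑ l ∈ Finset.Icc 0 (N-k),
          a j l k * c j * c l * φ (j-k) := by
  simp only [QN1, Finset.mul_sum]
  rw [Finset.sum_comm' (t' := Finset.Icc 1 N) (s' := fun k => Finset.Icc 0 (N-k))
    (fun i k => by simp only [Finset.mem_Icc, Finset.mem_range]; omega)]
  refine Finset.sum_congr rfl fun k hk => ?_
  simp only [Finset.mem_Icc] at hk
  refine Finset.sum_nbij' (fun i => i + k) (fun j => j - k) ?_ ?_ ?_ ?_ ?_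
  · intro i hi; simp only [Finset.mem_Icc] at hi ⊢; omega
  · intro j hj; simp only [Finset.mem_Icc] at hj ⊢; omega
  · intro i hi; show i + k - k = i; omega
  · intro j hj; simp only [Finset.mem_Icc] at hj; show j - k + k = j; omega
  · intro i hi
    refine Finset.sum_congr rfl fun l hl => ?_
    have : i + k - k = i := by omega
    rw [this]; ring

lemma weakB (a : ℕ → ℕ → ℕ → ℝ) (N : ℕ) (c : ℕ → ℝ) (φ : ℕ → ℝ) :
    ∑ i ∈ Finset.range (N+1), φ i * QN3 a N c i
      = ∑ k ∈ Finset.Icc 1 N, ∑ j ∈ Finset.Icc k N, ∑ l ∈ Finset.Icc 0 (N-k),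
          a j l k * c j * c l * φ (l+k) := by
  simp only [QN3, Finset.mul_sum]
  rw [Finset.sum_comm' (t' := Finset.Icc 1 N) (s' := fun k => Finset.Icc k N)
    (fun i k => by simp only [Finset.mem_Icc, Finset.mem_range]; omega)]
  refine Finset.sum_congr rfl fun k hk => ?_
  simp only [Finset.mem_Icc] at hk
  rw [Finset.sum_comm]
  refine Finset.sum_congr rfl fun j hj => ?_
  refine Finset.sum_nbij' (fun i => i - k) (fun l => l + k) ?_ ?_ ?_ ?_ ?_
  · intro i hi; simp only [Finset.mem_Icc] at hi ⊢; omega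
  · intro l hl; simp only [Finset.mem_Icc] at hl ⊢; omega
  · intro i hi; simp only [Finset.mem_Icc] at hi; show i - k + k = i; omega
  · intro l hl; show l + k - k = l; omega
  · intro i hi
    simp only [Finset.mem_Icc] at hi
    have : i - k + k = i := by omega
    rw [this]; ring

lemma weakC (a : ℕ → ℕ → ℕ → ℝ) (N : ℕ) (c : ℕ → ℝ) (φ : ℕ → ℝ) :
    ∑ i ∈ Finset.range (N+1), φ i * QN2 a N c i
      = -∑ k ∈ Finset.Icc 1 N, ∑ j ∈ Finset.Icc k N, ∑ l ∈ Finset.Icc 0 (N-k),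
          a j l k * c j * c l * φ l := by
  simp only [QN2, mul_neg, Finset.mul_sum, Finset.sum_neg_distrib, neg_inj]
  rw [Finset.sum_comm' (t' := Finset.Icc 1 N) (s' := fun k => Finset.Icc 0 (N-k))
    (fun i k => by simp only [Finset.mem_Icc, Finset.mem_range]; omega)]
  refine Finset.sum_congr rfl fun k hk => ?_
  rw [Finset.sum_comm]
  exact Finset.sum_congr rfl fun j hj => Finset.sum_congr rfl fun l hl => by ring

lemma weakD (a : ℕ → ℕ → ℕ → ℝ) (N : ℕ) (c : ℕ → ℝ) (φ : ℕ → ℝ) :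
    ∑ i ∈ Finset.range (N+1), φ i * QN4 a N c i
      = -∑ k ∈ Finset.Icc 1 N, ∑ j ∈ Finset.Icc k N, ∑ l ∈ Finset.Icc 0 (N-k),
          a j l k * c j * c l * φ j := by
  simp only [QN4, mul_neg, Finset.mul_sum, Finset.sum_neg_distrib, neg_inj]
  rw [Finset.sum_comm' (t' := Finset.Icc 1 N) (s' := fun k => Finset.Icc k N)
    (fun i k => by simp only [Finset.mem_Icc, Finset.mem_range]; omega)]
  exact Finset.sum_congr rfl fun k hk => Finset.sum_congr rfl fun j hj =>
    Finset.sum_congr rfl fun l hl => by ring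

lemma weak_form (a : ℕ → ℕ → ℕ → ℝ) (N : ℕ) (c : ℕ → ℝ) (φ : ℕ → ℝ) :
    ∑ i ∈ Finset.range (N+1), φ i * (QN1 a N c i + QN2 a N c i + QN3 a N c i + QN4 a N c i)
      = ∑ k ∈ Finset.Icc 1 N, ∑ j ∈ Finset.Icc k N, ∑ l ∈ Finset.Icc 0 (N-k),
          a j l k * c j * c l * (φ (j-k) + φ (l+k) - φ j - φ l) := by
  have expand : ∀ i ∈ Finset.range (N+1),
      φ i * (QN1 a N c i + QN2 a N c i + QN3 a N c i + QN4 a N c i)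
        = φ i * QN1 a N c i + φ i * QN2 a N c i + φ i * QN3 a N c i + φ i * QN4 a N c i :=
    fun i _ => by ring
  rw [Finset.sum_congr rfl expand]
  simp only [Finset.sum_add_distrib]
  rw [weakA, weakB, weakC, weakD]
  simp only [← Finset.sum_neg_distrib, ← Finset.sum_add_distrib]
  exact Finset.sum_congr rfl fun k _ => Finset.sum_congr rfl fun j _ =>
    Finset.sum_congr rfl fun l _ => by ring

lemma key_bound (a : ℕ → ℕ → ℕ → ℝ) (ha : ∀ i j k, 0 ≤ a i j k)
    (C Q : ℝ) (q : ℕ → ℕ → ℝ) (hGB : GB a C Q q)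
    (σ : ℝ → ℝ) (hσ0 : σ 0 = 0) (hσnn : ∀ x : ℝ, 0 ≤ x → 0 ≤ σ x)
    (hconv : ConvexOn ℝ (Set.Ici 0) σ)
    (m : ℝ) (hm : SigmaConst σ m)
    (N : ℕ) (b : ℕ → ℝ) (hb : ∀ i, i ≤ N → 0 ≤ b i) :
    ∑ k ∈ Finset.Icc 1 N, ∑ j ∈ Finset.Icc k N, ∑ l ∈ Finset.Icc 0 (N-k),
        a j l k * b j * b l * (σ ↑(j-k) + σ ↑(l+k) - σ ↑j - σ ↑l)
      ≤ 2 * C * Q * m * (∑ i ∈ Finset.range (N+1), (i:ℝ) * b i)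
          * (∑ i ∈ Finset.range (N+1), σ ↑i * b i) := by
  obtain ⟨hC, hQ, hq, hQsum, hGBa⟩ := hGB
  set M1 : ℝ := ∑ i ∈ Finset.range (N+1), (i:ℝ) * b i with hM1def
  set Wσ : ℝ := ∑ i ∈ Finset.range (N+1), σ ↑i * b i with hWdef
  have hM1 : 0 ≤ M1 := Finset.sum_nonneg fun i hi =>
    mul_nonneg (Nat.cast_nonneg i) (hb i (by simpa [Nat.lt_succ_iff] using hi))
  have hWσ : 0 ≤ Wσ := Finset.sum_nonneg fun i hi =>
    mul_nonneg (hσnn _ (Nat.cast_nonneg i)) (hb i (by simpa [Nat.lt_succ_iff] using hi))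
  have hC0 : (0:ℝ) ≤ C := by linarith
  have hm0 : 0 ≤ m := hm.1
  -- Step 1: termwise bound and collapse of the l-sum
  have step1 : ∑ k ∈ Finset.Icc 1 N, ∑ j ∈ Finset.Icc k N, ∑ l ∈ Finset.Icc 0 (N-k),
        a j l k * b j * b l * (σ ↑(j-k) + σ ↑(l+k) - σ ↑j - σ ↑l)
      ≤ ∑ k ∈ Finset.Icc 1 N, ∑ j ∈ Finset.Icc k N,
          C * m * q j k * ((j:ℝ) - k + 1) * b j * (σ ↑k * M1 + ↑k * Wσ) := by
    refine Finset.sum_le_sum fun k hk => Finset.sum_le_sum fun j hj => ?_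
    simp only [Finset.mem_Icc] at hk hj
    have hbj : 0 ≤ b j := hb j hj.2
    have hjk : (0:ℝ) ≤ (j:ℝ) - k + 1 := by
      have : (k:ℝ) ≤ j := Nat.cast_le.mpr hj.1
      linarith
    -- termwise bound
    have term : ∀ l ∈ Finset.Icc 0 (N-k),
        a j l k * b j * b l * (σ ↑(j-k) + σ ↑(l+k) - σ ↑j - σ ↑l)
          ≤ C * m * q j k * ((j:ℝ) - k + 1) * b j * (b l * ((l:ℝ) * σ ↑k + ↑k * σ ↑l)) := by
      intro l hl
      simp only [Finset.mem_Icc] at hl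
      have hbl : 0 ≤ b l := hb l (by omega)
      have hRHSnn : 0 ≤ C * m * q j k * ((j:ℝ) - k + 1) * b j * (b l * ((l:ℝ) * σ ↑k + ↑k * σ ↑l)) := by
        have h1 : 0 ≤ (l:ℝ) * σ ↑k + ↑k * σ ↑l :=
          add_nonneg (mul_nonneg (Nat.cast_nonneg l) (hσnn _ (Nat.cast_nonneg k)))
            (mul_nonneg (Nat.cast_nonneg k) (hσnn _ (Nat.cast_nonneg l)))
        exact mul_nonneg (mul_nonneg (mul_nonneg (mul_nonneg (mul_nonneg hC0 hm0)
          (hq j k)) hjk) hbj) (mul_nonneg hbl h1)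
      have hsa : σ ↑(j-k) + σ ↑k ≤ σ ↑j := by
        have h := sigma_superadd hconv hσ0 (x := ((j-k:ℕ):ℝ)) (y := (k:ℝ))
          (Nat.cast_nonneg _) (Nat.cast_nonneg _)
        have hcast : ((j-k:ℕ):ℝ) + (k:ℝ) = (j:ℝ) := by
          have : ((j-k:ℕ):ℝ) = (j:ℝ) - k := by
            rw [Nat.cast_sub hj.1]
          rw [this]; ring
        rwa [hcast] at h
      set br := σ ↑(j-k) + σ ↑(l+k) - σ ↑j - σ ↑l with hbrdef
      rcases le_or_gt br 0 with hbr | hbr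
      · have : a j l k * b j * b l * br ≤ 0 :=
          mul_nonpos_of_nonneg_of_nonpos (mul_nonneg (mul_nonneg (ha j l k) hbj) hbl) hbr
        linarith
      · -- br > 0 forces l ≥ 1
        have hl1 : 1 ≤ l := by
          by_contra h
          have hl0 : l = 0 := by omega
          have : br ≤ 0 := by
            rw [hbrdef, hl0]
            simp only [Nat.cast_zero, zero_add, hσ0]
            linarith [hsa]
          linarith
        have hGBjl : a j l k ≤ C * ((j:ℝ) - k + 1) * ((l:ℝ) + k) * q j k :=
          hGBa j l k hk.1 hj.1 hl1
        have hsc : ((l:ℝ) + k) * (σ ((l:ℝ) + (k:ℝ)) - σ ↑l - σ ↑k)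
            ≤ m * ((l:ℝ) * σ ↑k + (k:ℝ) * σ ↑l) := by
          have := hm.2 (l:ℝ) (k:ℝ) (Nat.cast_nonneg l) (by exact_mod_cast hk.1)
          linarith
        have hcast2 : σ ↑(l+k) = σ ((l:ℝ) + (k:ℝ)) := by push_cast; ring_nf
        have step2 : ((l:ℝ) + k) * br ≤ m * ((l:ℝ) * σ ↑k + (k:ℝ) * σ ↑l) := by
          have h3 : ((l:ℝ) + k) * (σ ↑(j-k) + σ ↑k - σ ↑j) ≤ 0 :=
            mul_nonpos_of_nonneg_of_nonpos (by positivity) (by linarith)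
          have hexp : ((l:ℝ) + k) * br
              = ((l:ℝ) + k) * (σ ↑(j-k) + σ ↑k - σ ↑j)
                + ((l:ℝ) + k) * (σ ((l:ℝ) + (k:ℝ)) - σ ↑l - σ ↑k) := by
            rw [hbrdef, hcast2]; ring
          linarith
        have hprod : 0 ≤ b j * b l * br := mul_nonneg (mul_nonneg hbj hbl) hbr.le
        have c1 := mul_le_mul_of_nonneg_right hGBjl hprod
        have hP : 0 ≤ C * ((j:ℝ) - k + 1) * q j k * (b j * b l) :=
          mul_nonneg (mul_nonneg (mul_nonneg hC0 hjk) (hq j k)) (mul_nonneg hbj hbl)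
        have c2 := mul_le_mul_of_nonneg_left step2 hP
        calc a j l k * b j * b l * br = a j l k * (b j * b l * br) := by ring
          _ ≤ (C * ((j:ℝ) - k + 1) * ((l:ℝ) + k) * q j k) * (b j * b l * br) := c1
          _ = (C * ((j:ℝ) - k + 1) * q j k * (b j * b l)) * (((l:ℝ) + k) * br) := by ring
          _ ≤ (C * ((j:ℝ) - k + 1) * q j k * (b j * b l)) * (m * ((l:ℝ) * σ ↑k + (k:ℝ) * σ ↑l)) := c2
          _ = C * m * q j k * ((j:ℝ) - k + 1) * b j * (b l * ((l:ℝ) * σ ↑k + ↑k * σ ↑l)) := by ring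
    calc ∑ l ∈ Finset.Icc 0 (N-k), a j l k * b j * b l * (σ ↑(j-k) + σ ↑(l+k) - σ ↑j - σ ↑l)
        ≤ ∑ l ∈ Finset.Icc 0 (N-k),
            C * m * q j k * ((j:ℝ) - k + 1) * b j * (b l * ((l:ℝ) * σ ↑k + ↑k * σ ↑l)) :=
          Finset.sum_le_sum term
      _ ≤ ∑ l ∈ Finset.range (N+1),
            C * m * q j k * ((j:ℝ) - k + 1) * b j * (b l * ((l:ℝ) * σ ↑k + ↑k * σ ↑l)) := by
          refine Finset.sum_le_sum_of_subset_of_nonneg ?_ ?_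
          · intro l hl; simp only [Finset.mem_Icc, Finset.mem_range] at *; omega
          · intro l hl _
            have hbl : 0 ≤ b l := hb l (by simpa [Nat.lt_succ_iff] using hl)
            have h1 : 0 ≤ (l:ℝ) * σ ↑k + ↑k * σ ↑l :=
              add_nonneg (mul_nonneg (Nat.cast_nonneg l) (hσnn _ (Nat.cast_nonneg k)))
                (mul_nonneg (Nat.cast_nonneg k) (hσnn _ (Nat.cast_nonneg l)))
            exact mul_nonneg (mul_nonneg (mul_nonneg (mul_nonneg (mul_nonneg hC0 hm0)
              (hq j k)) hjk) hbj) (mul_nonneg hbl h1)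
      _ = C * m * q j k * ((j:ℝ) - k + 1) * b j * (σ ↑k * M1 + ↑k * Wσ) := by
          rw [← Finset.mul_sum]
          congr 1
          rw [hM1def, hWdef, Finset.mul_sum, Finset.mul_sum, ← Finset.sum_add_distrib]
          exact Finset.sum_congr rfl fun l _ => by ring
  -- Step 2: swap the order of summation
  have step2 : ∑ k ∈ Finset.Icc 1 N, ∑ j ∈ Finset.Icc k N,
        C * m * q j k * ((j:ℝ) - k + 1) * b j * (σ ↑k * M1 + ↑k * Wσ)
      = ∑ j ∈ Finset.Icc 1 N, ∑ k ∈ Finset.Icc 1 j,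
          C * m * q j k * ((j:ℝ) - k + 1) * b j * (σ ↑k * M1 + ↑k * Wσ) :=
    Finset.sum_comm' (fun k j => by simp only [Finset.mem_Icc]; omega)
  -- Step 3: bound the inner k-sum for each j
  have step3 : ∑ j ∈ Finset.Icc 1 N, ∑ k ∈ Finset.Icc 1 j,
        C * m * q j k * ((j:ℝ) - k + 1) * b j * (σ ↑k * M1 + ↑k * Wσ)
      ≤ ∑ j ∈ Finset.Icc 1 N, C * m * Q * (σ ↑j * b j * M1 + ↑j * b j * Wσ) := by
    refine Finset.sum_le_sum fun j hj => ?_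
    simp only [Finset.mem_Icc] at hj
    have hbj : 0 ≤ b j := hb j hj.2
    have hjR : (0:ℝ) < j := by exact_mod_cast hj.1
    set D : ℝ := C * m * b j * (σ ↑j * M1 / ↑j + Wσ) with hDdef
    have hD : 0 ≤ D := by
      have h1 : 0 ≤ σ ↑j * M1 / ↑j :=
        div_nonneg (mul_nonneg (hσnn _ (Nat.cast_nonneg j)) hM1) (Nat.cast_nonneg j)
      have h2 : 0 ≤ σ ↑j * M1 / ↑j + Wσ := by linarith
      rw [hDdef]
      exact mul_nonneg (mul_nonneg (mul_nonneg hC0 hm0) hbj) h2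
    have perk : ∀ k ∈ Finset.Icc 1 j,
        C * m * q j k * ((j:ℝ) - k + 1) * b j * (σ ↑k * M1 + ↑k * Wσ)
          ≤ D * ((k:ℝ) * ((j:ℝ) - k + 1) * q j k) := by
      intro k hk
      simp only [Finset.mem_Icc] at hk
      have hkj : (k:ℝ) ≤ j := Nat.cast_le.mpr hk.2
      have hjk1 : (0:ℝ) ≤ (j:ℝ) - k + 1 := by linarith
      have hsl : (j:ℝ) * σ ↑k ≤ (k:ℝ) * σ ↑j :=
        sigma_slope hconv hσ0 (Nat.cast_nonneg k) hkj
      have hσk : σ ↑k ≤ (k:ℝ) * σ ↑j / ↑j := by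
        rw [le_div_iff₀ hjR]; linarith
      have hbr : σ ↑k * M1 + ↑k * Wσ ≤ (k:ℝ) * (σ ↑j * M1 / ↑j + Wσ) := by
        have := mul_le_mul_of_nonneg_right hσk hM1
        have heq : ((k:ℝ) * σ ↑j / ↑j) * M1 = (k:ℝ) * (σ ↑j * M1 / ↑j) := by ring
        rw [heq] at this
        have : σ ↑k * M1 + ↑k * Wσ ≤ (k:ℝ) * (σ ↑j * M1 / ↑j) + ↑k * Wσ := by linarith
        linarith [this]
      have hL : 0 ≤ C * m * q j k * ((j:ℝ) - k + 1) * b j :=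
        mul_nonneg (mul_nonneg (mul_nonneg (mul_nonneg hC0 hm0) (hq j k)) hjk1) hbj
      calc C * m * q j k * ((j:ℝ) - k + 1) * b j * (σ ↑k * M1 + ↑k * Wσ)
          ≤ C * m * q j k * ((j:ℝ) - k + 1) * b j * ((k:ℝ) * (σ ↑j * M1 / ↑j + Wσ)) :=
            mul_le_mul_of_nonneg_left hbr hL
        _ = D * ((k:ℝ) * ((j:ℝ) - k + 1) * q j k) := by rw [hDdef]; ring
    calc ∑ k ∈ Finset.Icc 1 j, C * m * q j k * ((j:ℝ) - k + 1) * b j * (σ ↑k * M1 + ↑k * Wσ)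
        ≤ ∑ k ∈ Finset.Icc 1 j, D * ((k:ℝ) * ((j:ℝ) - k + 1) * q j k) :=
          Finset.sum_le_sum perk
      _ = D * ∑ k ∈ Finset.Icc 1 j, (k:ℝ) * ((j:ℝ) - k + 1) * q j k := by
          rw [Finset.mul_sum]
      _ ≤ D * (Q * j) := mul_le_mul_of_nonneg_left (hQsum j hj.1) hD
      _ = C * m * Q * (σ ↑j * b j * M1 + ↑j * b j * Wσ) := by
          rw [hDdef]
          field_simp
  -- Step 4: conclude
  have step4 : ∑ j ∈ Finset.Icc 1 N, C * m * Q * (σ ↑j * b j * M1 + ↑j * b j * Wσ)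
      ≤ 2 * C * Q * m * M1 * Wσ := by
    have hsub1 : ∑ j ∈ Finset.Icc 1 N, σ ↑j * b j ≤ Wσ := by
      rw [hWdef]
      refine Finset.sum_le_sum_of_subset_of_nonneg ?_ ?_
      · intro l hl; simp only [Finset.mem_Icc, Finset.mem_range] at *; omega
      · intro i hi _
        exact mul_nonneg (hσnn _ (Nat.cast_nonneg i)) (hb i (by simpa [Nat.lt_succ_iff] using hi))
    have hsub2 : ∑ j ∈ Finset.Icc 1 N, (j:ℝ) * b j ≤ M1 := by
      rw [hM1def]
      refine Finset.sum_le_sum_of_subset_of_nonneg ?_ ?_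
      · intro l hl; simp only [Finset.mem_Icc, Finset.mem_range] at *; omega
      · intro i hi _
        exact mul_nonneg (Nat.cast_nonneg i) (hb i (by simpa [Nat.lt_succ_iff] using hi))
    have heq : ∑ j ∈ Finset.Icc 1 N, C * m * Q * (σ ↑j * b j * M1 + ↑j * b j * Wσ)
        = C * m * Q * ((∑ j ∈ Finset.Icc 1 N, σ ↑j * b j) * M1
            + (∑ j ∈ Finset.Icc 1 N, (j:ℝ) * b j) * Wσ) := by
      rw [Finset.sum_mul, Finset.sum_mul, ← Finset.sum_add_distrib, Finset.mul_sum]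
    rw [heq]
    have hCmQ : 0 ≤ C * m * Q := mul_nonneg (mul_nonneg hC0 hm0) (by linarith)
    have h1 : (∑ j ∈ Finset.Icc 1 N, σ ↑j * b j) * M1 ≤ Wσ * M1 :=
      mul_le_mul_of_nonneg_right hsub1 hM1
    have h2 : (∑ j ∈ Finset.Icc 1 N, (j:ℝ) * b j) * Wσ ≤ M1 * Wσ :=
      mul_le_mul_of_nonneg_right hsub2 hWσ
    calc C * m * Q * ((∑ j ∈ Finset.Icc 1 N, σ ↑j * b j) * M1
            + (∑ j ∈ Finset.Icc 1 N, (j:ℝ) * b j) * Wσ)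
        ≤ C * m * Q * (Wσ * M1 + M1 * Wσ) := by
          refine mul_le_mul_of_nonneg_left ?_ hCmQ; linarith
      _ = 2 * C * Q * m * M1 * Wσ := by ring
  calc ∑ k ∈ Finset.Icc 1 N, ∑ j ∈ Finset.Icc k N, ∑ l ∈ Finset.Icc 0 (N-k),
        a j l k * b j * b l * (σ ↑(j-k) + σ ↑(l+k) - σ ↑j - σ ↑l)
      ≤ ∑ k ∈ Finset.Icc 1 N, ∑ j ∈ Finset.Icc k N,
          C * m * q j k * ((j:ℝ) - k + 1) * b j * (σ ↑k * M1 + ↑k * Wσ) := step1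
    _ = ∑ j ∈ Finset.Icc 1 N, ∑ k ∈ Finset.Icc 1 j,
          C * m * q j k * ((j:ℝ) - k + 1) * b j * (σ ↑k * M1 + ↑k * Wσ) := step2
    _ ≤ ∑ j ∈ Finset.Icc 1 N, C * m * Q * (σ ↑j * b j * M1 + ↑j * b j * Wσ) := step3
    _ ≤ 2 * C * Q * m * M1 * Wσ := step4



lemma hasDerivAt_all (a : ℕ → ℕ → ℕ → ℝ) (N : ℕ) (T : ℝ) (c : ℕ → ℝ → ℝ)
    (hc : IsTruncSolIso a N (Set.Icc 0 T) c) {t : ℝ} (ht : t ∈ Set.Icc 0 T)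
    {i : ℕ} (hi : i ≤ N) :
    HasDerivAt (c i) (QN1 a N (fun n => c n t) i + QN2 a N (fun n => c n t) i +
      QN3 a N (fun n => c n t) i + QN4 a N (fun n => c n t) i) t := by
  obtain ⟨h0, hmid, hNend⟩ := hc t ht
  rcases Nat.eq_zero_or_pos i with rfl | hpos
  · have e3 : QN3 a N (fun n => c n t) 0 = 0 := by
      have : Finset.Icc 1 0 = (∅ : Finset ℕ) := Finset.Icc_eq_empty (by omega)
      simp [QN3, this]
    have e4 : QN4 a N (fun n => c n t) 0 = 0 := by
      have : Finset.Icc 1 0 = (∅ : Finset ℕ) := Finset.Icc_eq_empty (by omega)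
      simp [QN4, this]
    rw [e3, e4, add_zero, add_zero]
    exact h0
  · rcases eq_or_lt_of_le hi with rfl | hlt
    · have hempty : Finset.Icc 1 (i - i) = (∅ : Finset ℕ) := Finset.Icc_eq_empty (by omega)
      have e1 : QN1 a i (fun n => c n t) i = 0 := by simp [QN1, hempty]
      have e2 : QN2 a i (fun n => c n t) i = 0 := by simp [QN2, hempty]
      rw [e1, e2, zero_add, zero_add]
      exact hNend
    · exact hmid i hpos (by omega)

lemma hasDerivAt_weighted (a : ℕ → ℕ → ℕ → ℝ) (N : ℕ) (T : ℝ) (c : ℕ → ℝ → ℝ)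
    (hc : IsTruncSolIso a N (Set.Icc 0 T) c) {t : ℝ} (ht : t ∈ Set.Icc 0 T)
    (φ : ℕ → ℝ) :
    HasDerivAt (fun s => ∑ i ∈ Finset.range (N+1), φ i * c i s)
      (∑ k ∈ Finset.Icc 1 N, ∑ j ∈ Finset.Icc k N, ∑ l ∈ Finset.Icc 0 (N-k),
        a j l k * c j t * c l t * (φ (j-k) + φ (l+k) - φ j - φ l)) t := by
  rw [← weak_form a N (fun n => c n t) φ]
  exact HasDerivAt.fun_sum fun i hi =>
    HasDerivAt.const_mul (φ i)
      (hasDerivAt_all a N T c hc ht (by simpa [Nat.lt_succ_iff] using hi))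

lemma mass_le (a : ℕ → ℕ → ℕ → ℝ) (N : ℕ) (T : ℝ) (hT : 0 ≤ T) (c : ℕ → ℝ → ℝ)
    (hc : IsTruncSolIso a N (Set.Icc 0 T) c)
    (c0 : ℕ → ℝ) (hc0 : ∀ i, 0 ≤ c0 i) (hinit : ∀ i, i ≤ N → c i 0 = c0 i) :
    ∀ t ∈ Set.Icc (0:ℝ) T,
      ∑ i ∈ Finset.range (N+1), (i:ℝ) * c i t ≤ ∑ i ∈ Finset.range (N+1), (i:ℝ) * c0 i := by
  set f : ℝ → ℝ := fun s => ∑ i ∈ Finset.range (N+1), (i:ℝ) * c i s with hfdef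
  have hderiv : ∀ t ∈ Set.Icc (0:ℝ) T, HasDerivAt f 0 t := by
    intro t ht
    have h := hasDerivAt_weighted a N T c hc ht (fun n => (n:ℝ))
    have hz : ∑ k ∈ Finset.Icc 1 N, ∑ j ∈ Finset.Icc k N, ∑ l ∈ Finset.Icc 0 (N-k),
        a j l k * c j t * c l t * (((j-k:ℕ):ℝ) + ((l+k:ℕ):ℝ) - (j:ℝ) - (l:ℝ)) = 0 := by
      refine Finset.sum_eq_zero fun k hk => Finset.sum_eq_zero fun j hj =>
        Finset.sum_eq_zero fun l hl => ?_
      simp only [Finset.mem_Icc] at hj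
      rw [Nat.cast_sub hj.1]
      push_cast
      ring
    rw [hz] at h
    exact h
  have hcont : ContinuousOn f (Set.Icc 0 T) := fun x hx =>
    ((hderiv x hx).continuousAt).continuousWithinAt
  have hf0 : f 0 = ∑ i ∈ Finset.range (N+1), (i:ℝ) * c0 i := by
    refine Finset.sum_congr rfl fun i hi => ?_
    rw [hinit i (by simpa [Nat.lt_succ_iff] using hi)]
  have hf0nn : 0 ≤ f 0 := by
    rw [hf0]
    exact Finset.sum_nonneg fun i _ => mul_nonneg (Nat.cast_nonneg i) (hc0 i)
  have key := norm_le_gronwallBound_of_norm_deriv_right_le (f := f) (f' := fun _ => (0:ℝ))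
    (δ := ‖f 0‖) (K := 0) (ε := 0) (a := 0) (b := T) hcont
    (fun x hx => (hderiv x (Set.mem_Icc.mpr ⟨hx.1, hx.2.le⟩)).hasDerivWithinAt)
    le_rfl (fun x _ => by simp)
  intro t ht
  have h1 := key t ht
  rw [gronwallBound_K0] at h1
  simp only [zero_mul, mul_zero, add_zero] at h1
  have h2 : f t ≤ ‖f t‖ := le_abs_self _
  have h3 : ‖f 0‖ = f 0 := abs_of_nonneg hf0nn
  rw [← hf0]
  calc f t ≤ ‖f t‖ := h2
    _ ≤ ‖f 0‖ := h1
    _ = f 0 := h3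

/-- Lemma 4.5, first part: moment bound for the truncated isolated system. -/
theorem truncated_sigma_moment_bound
    (a : ℕ → ℕ → ℕ → ℝ) (ha : ∀ i j k, 0 ≤ a i j k)
    (hzero : ∀ p : ℕ, 1 ≤ p → a p 0 p = 0)
    (C Q : ℝ) (q : ℕ → ℕ → ℝ) (hGB : GB a C Q q)
    (σ : ℝ → ℝ) (hσ : ClassE σ ∨ ClassE1 σ) (m : ℝ) (hm : SigmaConst σ m)
    (N : ℕ) (hN : 2 ≤ N) (T : ℝ) (hT : 0 ≤ T)
    (c : ℕ → ℝ → ℝ) (hc : IsTruncSolIso a N (Set.Icc 0 T) c)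
    (c0 : ℕ → ℝ) (hc0 : ∀ i, 0 ≤ c0 i)
    (hinit : ∀ i, i ≤ N → c i 0 = c0 i)
    (hnn : ∀ i, i ≤ N → ∀ t ∈ Set.Icc (0 : ℝ) T, 0 ≤ c i t)
    (K : ℝ) (hK : K = 2 * C * Q * m * ∑ i ∈ Finset.range (N + 1), (i : ℝ) * c0 i) :
    ∀ t ∈ Set.Icc (0 : ℝ) T,
      ∑ i ∈ Finset.range (N + 1), σ i * c i t
        ≤ Real.exp (K * t) * ∑ i ∈ Finset.range (N + 1), σ i * c0 i := by
  have hconv : ConvexOn ℝ (Set.Ici 0) σ := by rcases hσ with h | h <;> exact h.2.1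
  have hσnn : ∀ x : ℝ, 0 ≤ x → 0 ≤ σ x := by rcases hσ with h | h <;> exact h.2.2.1
  have hσ0 : σ 0 = 0 := by rcases hσ with h | h <;> exact h.2.2.2.1
  have hC0 : (0:ℝ) ≤ C := by linarith [hGB.1]
  have hQ0 : (0:ℝ) ≤ Q := by linarith [hGB.2.1]
  have hm0 : 0 ≤ m := hm.1
  set M0 : ℝ := ∑ i ∈ Finset.range (N+1), (i:ℝ) * c0 i with hM0def
  have hM0 : 0 ≤ M0 := Finset.sum_nonneg fun i _ => mul_nonneg (Nat.cast_nonneg i) (hc0 i)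
  set f : ℝ → ℝ := fun s => ∑ i ∈ Finset.range (N+1), σ ↑i * c i s with hfdef
  set f' : ℝ → ℝ := fun s => ∑ k ∈ Finset.Icc 1 N, ∑ j ∈ Finset.Icc k N,
      ∑ l ∈ Finset.Icc 0 (N-k),
        a j l k * c j s * c l s * (σ ↑(j-k) + σ ↑(l+k) - σ ↑j - σ ↑l) with hf'def
  have hD : ∀ t ∈ Set.Icc (0:ℝ) T, HasDerivAt f (f' t) t := fun t ht =>
    hasDerivAt_weighted a N T c hc ht (fun n => σ (n:ℝ))
  have hcont : ContinuousOn f (Set.Icc 0 T) := fun x hx =>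
    ((hD x hx).continuousAt).continuousWithinAt
  have hf0 : f 0 = ∑ i ∈ Finset.range (N+1), σ ↑i * c0 i :=
    Finset.sum_congr rfl fun i hi => by
      rw [hinit i (by simpa [Nat.lt_succ_iff] using hi)]
  have bound : ∀ x ∈ Set.Ico (0:ℝ) T, f' x ≤ K * f x + 0 := by
    intro x hx
    have hxI : x ∈ Set.Icc (0:ℝ) T := ⟨hx.1, hx.2.le⟩
    have hb : ∀ i, i ≤ N → 0 ≤ c i x := fun i hi => hnn i hi x hxI
    have h1 := key_bound a ha C Q q hGB σ hσ0 hσnn hconv m hm N (fun n => c n x) hb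
    have hmass := mass_le a N T hT c hc c0 hc0 hinit x hxI
    have hWx : 0 ≤ ∑ i ∈ Finset.range (N+1), σ ↑i * c i x :=
      Finset.sum_nonneg fun i hi => mul_nonneg (hσnn _ (Nat.cast_nonneg i))
        (hb i (by simpa [Nat.lt_succ_iff] using hi))
    have h2CQm : (0:ℝ) ≤ 2 * C * Q * m :=
      mul_nonneg (mul_nonneg (mul_nonneg (by norm_num) hC0) hQ0) hm0
    have h2 : 2 * C * Q * m * (∑ i ∈ Finset.range (N+1), (i:ℝ) * c i x)
          * (∑ i ∈ Finset.range (N+1), σ ↑i * c i x)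
        ≤ 2 * C * Q * m * M0 * (∑ i ∈ Finset.range (N+1), σ ↑i * c i x) :=
      mul_le_mul_of_nonneg_right (mul_le_mul_of_nonneg_left hmass h2CQm) hWx
    calc f' x ≤ 2 * C * Q * m * (∑ i ∈ Finset.range (N+1), (i:ℝ) * c i x)
          * (∑ i ∈ Finset.range (N+1), σ ↑i * c i x) := h1
      _ ≤ 2 * C * Q * m * M0 * (∑ i ∈ Finset.range (N+1), σ ↑i * c i x) := h2
      _ = K * f x + 0 := by rw [hK]; simp only [hfdef]; ring
  have hf' : ∀ x ∈ Set.Ico (0:ℝ) T, ∀ r, f' x < r →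
      ∃ᶠ z in nhdsWithin x (Set.Ioi x), (z - x)⁻¹ * (f z - f x) < r := by
    intro x hx r hr
    have h := ((hD x ⟨hx.1, hx.2.le⟩).hasDerivWithinAt (s := Set.Ici x)).liminf_right_slope_le hr
    refine h.mono fun z hz => ?_
    rwa [slope_def_field, div_eq_inv_mul] at hz
  intro t ht
  have hg := le_gronwallBound_of_liminf_deriv_right_le hcont hf' (le_refl (f 0)) bound t ht
  rw [sub_zero, gronwallBound_ε0] at hg
  rw [hf0] at hg
  calc ∑ i ∈ Finset.range (N+1), σ ↑i * c i t = f t := rfl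
    _ ≤ (∑ i ∈ Finset.range (N+1), σ ↑i * c0 i) * Real.exp (K * t) := hg
    _ = Real.exp (K * t) * ∑ i ∈ Finset.range (N+1), σ ↑i * c0 i := mul_comm _ _
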